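/- Let Y be a real Banach space and X* = Y* its dual (more generally, let X* be the dual of a Banach space). Then X* has the IP_{f,∞}: every family of closed balls in X* with empty intersection contains a finite subfamily with empty intersection. -/

import Mathlib

open Metric Set Pointwise

/-- Any dual Banach space has the IP_{f,∞}: every family of closed balls in `X*` with empty
intersection contains a finite subfamily with empty intersection. -/
theorem stmt_11 {X : Type*} [NormedAddCommGroup X] [NormedSpace ℝ X] [CompleteSpace X] :
    ∀ B : Set ((X →L[ℝ] ℝ) × ℝ), (⋂ p ∈ B, closedBall p.1 p.2) = ∅ →
      ∃ s : Finset ((X →L[ℝ] ℝ) × ℝ), ↑s ⊆ B ∧ (⋂ p ∈ s, closedBall p.1 p.2) = ∅ := by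
  intro B hB
  classical
  rcases B.eq_empty_or_nonempty with rfl | ⟨p₀, hp₀⟩
  · simp at hB
  -- work in the weak* topology
  set K : Set (WeakDual ℝ X) := WeakDual.toStrongDual ⁻¹' closedBall p₀.1 p₀.2 with hK
  have hKc : IsCompact K := WeakDual.isCompact_closedBall p₀.1 p₀.2
  set Z : B → Set (WeakDual ℝ X) :=
    fun p => WeakDual.toStrongDual ⁻¹' closedBall p.1.1 p.1.2 with hZ
  have hZc : ∀ p : B, IsClosed (Z p) := fun p => WeakDual.isClosed_closedBall _ _
  have hempty : K ∩ ⋂ p : B, Z p = ∅ := by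
    rw [eq_empty_iff_forall_notMem]
    intro x hx
    have : (WeakDual.toStrongDual x : X →L[ℝ] ℝ) ∈ ⋂ p ∈ B, closedBall p.1 p.2 := by
      rw [mem_iInter₂]
      intro p hp
      exact mem_iInter.1 hx.2 ⟨p, hp⟩
    rw [hB] at this
    exact this
  obtain ⟨t, ht⟩ := hKc.elim_finite_subfamily_closed Z hZc hempty
  refine ⟨insert p₀ (t.image Subtype.val), ?_, ?_⟩
  · intro p hp
    simp only [Finset.coe_insert, Set.mem_insert_iff, Finset.coe_image, mem_image,
      Finset.mem_coe] at hp
    rcases hp with rfl | ⟨q, _, rfl⟩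
    · exact hp₀
    · exact q.2
  · rw [eq_empty_iff_forall_notMem]
    intro x hx
    rw [mem_iInter₂] at hx
    have hxK : (WeakDual.toStrongDual.symm x : WeakDual ℝ X) ∈ K ∩ ⋂ p ∈ t, Z p := by
      constructor
      · show (WeakDual.toStrongDual (WeakDual.toStrongDual.symm x) : X →L[ℝ] ℝ) ∈ _
        rw [LinearEquiv.apply_symm_apply]
        exact hx p₀ (Finset.mem_insert_self _ _)
      · rw [mem_iInter₂]
        intro p hp
        show (WeakDual.toStrongDual (WeakDual.toStrongDual.symm x) : X →L[ℝ] ℝ) ∈ _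
        rw [LinearEquiv.apply_symm_apply]
        exact hx p.1 (Finset.mem_insert_of_mem (Finset.mem_image_of_mem _ hp))
    rw [ht] at hxK
    exact hxK
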